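/- Let h = c + d with d = 1 and c ≥ 1, and let π be the h-cycle i ↦ i + 1 (mod h). For each of the h orbits O of (π,π) on {1,…,h}², with ε assigned by ε_{i,j} = 1 if i ≤ 1 < j, ε_{i,j} = −1 if j ≤ 1 < i, 0 otherwise: exactly one orbit (the diagonal) has ε_O identically 0, and every other orbit has ε_O containing exactly one entry equal to 1 and one entry equal to −1 and is a circular sequence of level 1 with exactly one free linear segment (of level 1). Consequently γ(m) = ∑_O ∑_{n=1}^m a_n(O) = h − 1 = c for all m ≥ 1. -/
import Mathlib


/-- The sign sequence on `J² = {1,…,h}²` (with `0`-based indices): `ε(i,j) = 1` if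
`i ≤ d < j`, `ε(i,j) = -1` if `j ≤ d < i`, and `ε(i,j) = 0` otherwise. -/
def signOf (h d : ℕ) (x : Fin h × Fin h) : ℤ :=
  if x.1.val < d ∧ d ≤ x.2.val then 1
  else if x.2.val < d ∧ d ≤ x.1.val then -1
  else 0

/-- `x` is the starting point of a free linear segment of level `n` in the cyclic sign
sequence of the orbit of `x` under the permutation `σ`: reading off the values
`ε x, ε (σ x), ε (σ² x), …` along the orbit (whose length is the minimal period of `x`),
there is an index `t` within the period with `ε x = -1`, `ε (σ^t x) = 1`, total sum `0`
over `[0, t]`, all proper initial partial sums in `[-n, 0)`, and some initial partial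
sum equal to `-n`. -/
def StartsSegment {α : Type*} (σ : Equiv.Perm α) (ε : α → ℤ) (n : ℕ) (x : α) : Prop :=
  ε x = -1 ∧
  ∃ t : ℕ, 0 < t ∧ t < Function.minimalPeriod (⇑σ) x ∧ ε ((σ ^ t) x) = 1 ∧
    (∑ i ∈ Finset.range (t + 1), ε ((σ ^ i) x)) = 0 ∧
    (∀ j : ℕ, j < t →
      -(n : ℤ) ≤ (∑ i ∈ Finset.range (j + 1), ε ((σ ^ i) x)) ∧
        (∑ i ∈ Finset.range (j + 1), ε ((σ ^ i) x)) < 0) ∧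
    (∃ j₀ : ℕ, j₀ < t ∧ (∑ i ∈ Finset.range (j₀ + 1), ε ((σ ^ i) x)) = -(n : ℤ))

/-- `γ(m) = ∑_O ∑_{n=1}^m a_n(O)`: summing over the orbits `O` of `σ` the number
`a_n(O)` of free linear segments of level `n` of the associated cyclic sign sequence.
Since distinct free linear segments of a cyclic sequence have distinct starting
indices, `∑_O a_n(O)` equals the number of points that start a level-`n` free linear
segment in their orbit. -/
noncomputable def gammaSeq {α : Type*} (σ : Equiv.Perm α) (ε : α → ℤ) (m : ℕ) : ℕ :=
  ∑ n ∈ Finset.Icc 1 m, Nat.card {x : α // StartsSegment σ ε n x}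


/-- The cyclic sign sequence of the orbit of `x` under `σ` is circular of level `n`:
its sum over a full period `l` is `0`, every interval sum along the orbit of length at
most `l` has absolute value `≤ n`, and some interval sum attains absolute value `n`. -/
def OrbitCircularOfLevel {α : Type*} (σ : Equiv.Perm α) (ε : α → ℤ) (n : ℕ) (x : α) :
    Prop :=
  (∑ i ∈ Finset.range (Function.minimalPeriod (⇑σ) x), ε ((σ ^ i) x)) = 0 ∧
    (∀ u s : ℕ, s < Function.minimalPeriod (⇑σ) x →
      |∑ i ∈ Finset.Icc u (u + s), ε ((σ ^ i) x)| ≤ (n : ℤ)) ∧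
    (∃ u s : ℕ, s < Function.minimalPeriod (⇑σ) x ∧
      |∑ i ∈ Finset.Icc u (u + s), ε ((σ ^ i) x)| = (n : ℤ))

namespace GammaD1

def zt (h w : ℕ) : ℕ := (h - w % h) % h



lemma dvd_two_mul_cases {h n : ℕ} (hh : 0 < h) (hd : h ∣ n) (hn : n < 2 * h) :
    n = 0 ∨ n = h := by
  obtain ⟨k, rfl⟩ := hd
  rcases Nat.lt_or_ge k 2 with hk | hk
  · interval_cases k <;> omega
  · have : h * 2 ≤ h * k := Nat.mul_le_mul_left h hk
    omega



lemma zt_lt {h : ℕ} (hh : 0 < h) (w : ℕ) : zt h w < h := Nat.mod_lt _ hh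

lemma zt_eq {h : ℕ} (hh : 0 < h) (w : ℕ) :
    zt h w = if w % h = 0 then 0 else h - w % h := by
  unfold zt
  rcases Nat.eq_zero_or_pos (w % h) with h0 | h0
  · simp [h0]
  · have hw : w % h < h := Nat.mod_lt _ hh
    rw [if_neg h0.ne', Nat.mod_eq_of_lt (by omega)]

lemma mod_zero_iff {h : ℕ} (hh : 0 < h) (w i : ℕ) (hi : i < h) :
    (w + i) % h = 0 ↔ i = zt h w := by
  have hw : w % h < h := Nat.mod_lt _ hh
  have key : (w + i) % h = (w % h + i) % h := by rw [Nat.mod_add_mod]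
  rw [key, zt_eq hh]
  constructor
  · intro h0
    have hd : h ∣ w % h + i := Nat.dvd_of_mod_eq_zero h0
    rcases dvd_two_mul_cases hh hd (by omega) with h1 | h1 <;> split_ifs <;> omega
  · intro hi0
    split_ifs at hi0 with hz
    · subst hi0; rw [hz]; simp
    · subst hi0
      rw [Nat.add_sub_cancel' hw.le, Nat.mod_self]

lemma zt_add {h : ℕ} (hh : 0 < h) (w : ℕ) : (w + zt h w) % h = 0 :=
  (mod_zero_iff hh w _ (zt_lt hh w)).mpr rfl

lemma zt_inj {h : ℕ} (hh : 0 < h) {a b : ℕ} (ha : a < h) (hb : b < h)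
    (hab : zt h a = zt h b) : a = b := by
  have h1 := zt_add hh a
  have h2 := zt_add hh b
  rw [← hab] at h2
  have hz := zt_lt hh a
  have d1 := Nat.dvd_of_mod_eq_zero h1
  have d2 := Nat.dvd_of_mod_eq_zero h2
  rcases dvd_two_mul_cases hh d1 (by omega) with e1 | e1 <;>
    rcases dvd_two_mul_cases hh d2 (by omega) with e2 | e2 <;> omega

lemma count_range {h : ℕ} (hh : 0 < h) (w m : ℕ) (hm : m ≤ h) :
    ((Finset.range m).filter (fun i => (w + i) % h = 0)).card
      = if zt h w < m then 1 else 0 := by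
  split_ifs with hlt
  · rw [Finset.card_eq_one]
    refine ⟨zt h w, ?_⟩
    ext i
    simp only [Finset.mem_filter, Finset.mem_range, Finset.mem_singleton]
    constructor
    · rintro ⟨h1, h2⟩; exact (mod_zero_iff hh w i (by omega)).mp h2
    · rintro rfl; exact ⟨hlt, zt_add hh w⟩
  · rw [Finset.card_eq_zero, Finset.filter_eq_empty_iff]
    intro i hi
    rw [Finset.mem_range] at hi
    rw [mod_zero_iff hh w i (by omega)]
    omega

lemma count_Icc_le_one {h : ℕ} (hh : 0 < h) (w u s : ℕ) (hs : s < h) :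
    ((Finset.Icc u (u + s)).filter (fun i => (w + i) % h = 0)).card ≤ 1 := by
  rw [Finset.card_le_one]
  intro i hi j hj
  simp only [Finset.mem_filter, Finset.mem_Icc] at hi hj
  have d1 := Nat.dvd_of_mod_eq_zero hi.2
  have d2 := Nat.dvd_of_mod_eq_zero hj.2
  rcases le_total i j with hle | hle
  · have hd : h ∣ (w + j) - (w + i) := Nat.dvd_sub d2 d1
    have h2 : (w + j) - (w + i) = j - i := by omega
    rw [h2] at hd
    have := Nat.eq_zero_of_dvd_of_lt hd
    omega
  · have hd : h ∣ (w + i) - (w + j) := Nat.dvd_sub d1 d2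
    have h2 : (w + i) - (w + j) = i - j := by omega
    rw [h2] at hd
    have := Nat.eq_zero_of_dvd_of_lt hd
    omega

lemma ite_sub_eq_one_iff (P Q : Prop) [Decidable P] [Decidable Q] :
    ((if P then (1:ℤ) else 0) - (if Q then 1 else 0) = 1) ↔ (P ∧ ¬Q) := by
  split_ifs <;> simp_all

lemma ite_sub_eq_neg_one_iff (P Q : Prop) [Decidable P] [Decidable Q] :
    ((if P then (1:ℤ) else 0) - (if Q then 1 else 0) = -1) ↔ (¬P ∧ Q) := by
  split_ifs <;> simp_all


variable {c : ℕ} (π : Equiv.Perm (Fin (c + 1)))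

lemma pi_pow_val (hπ : ∀ i : Fin (c + 1), (π i).val = (i.val + 1) % (c + 1)) :
    ∀ (i : ℕ) (a : Fin (c + 1)), ((π ^ i) a).val = (a.val + i) % (c + 1) := by
  intro i
  induction i with
  | zero => intro a; simp [Nat.mod_eq_of_lt a.isLt]
  | succ n ih =>
    intro a
    rw [pow_succ, Equiv.Perm.mul_apply, ih, hπ, Nat.mod_add_mod]
    congr 1
    omega

lemma sigma_pow (i : ℕ) (x : Fin (c + 1) × Fin (c + 1)) :
    ((Equiv.prodCongr π π) ^ i) x = ((π ^ i) x.1, (π ^ i) x.2) := by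
  induction i with
  | zero => simp
  | succ n ih =>
    rw [pow_succ', Equiv.Perm.mul_apply, ih, pow_succ']
    rfl

lemma eps_eq (hπ : ∀ i : Fin (c + 1), (π i).val = (i.val + 1) % (c + 1))
    (i : ℕ) (x : Fin (c + 1) × Fin (c + 1)) :
    signOf (c + 1) 1 (((Equiv.prodCongr π π) ^ i) x)
      = (if (x.1.val + i) % (c + 1) = 0 then (1:ℤ) else 0)
        - (if (x.2.val + i) % (c + 1) = 0 then (1:ℤ) else 0) := by
  rw [sigma_pow]
  show (if ((π ^ i) x.1).val < 1 ∧ 1 ≤ ((π ^ i) x.2).val then (1:ℤ)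
    else if ((π ^ i) x.2).val < 1 ∧ 1 ≤ ((π ^ i) x.1).val then -1 else 0) = _
  rw [pi_pow_val π hπ, pi_pow_val π hπ]
  generalize (x.1.val + i) % (c + 1) = A
  generalize (x.2.val + i) % (c + 1) = B
  split_ifs <;> omega

lemma minPer (hπ : ∀ i : Fin (c + 1), (π i).val = (i.val + 1) % (c + 1))
    (x : Fin (c + 1) × Fin (c + 1)) :
    Function.minimalPeriod (⇑(Equiv.prodCongr π π)) x = c + 1 := by
  have hper : Function.IsPeriodicPt (⇑(Equiv.prodCongr π π)) (c + 1) x := by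
    show (⇑(Equiv.prodCongr π π))^[c + 1] x = x
    rw [← Equiv.Perm.coe_pow]
    rw [sigma_pow]
    have hfix : ∀ a : Fin (c + 1), (π ^ (c + 1)) a = a := by
      intro a
      ext
      rw [pi_pow_val π hπ, Nat.add_mod_right, Nat.mod_eq_of_lt a.isLt]
    rw [hfix x.1, hfix x.2]
  have hpos : 0 < Function.minimalPeriod (⇑(Equiv.prodCongr π π)) x :=
    hper.minimalPeriod_pos (by omega)
  have hdvd : Function.minimalPeriod (⇑(Equiv.prodCongr π π)) x ∣ (c + 1) :=
    Function.IsPeriodicPt.minimalPeriod_dvd hper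
  have hle : Function.minimalPeriod (⇑(Equiv.prodCongr π π)) x ≤ c + 1 :=
    Nat.le_of_dvd (by omega) hdvd
  set p := Function.minimalPeriod (⇑(Equiv.prodCongr π π)) x with hp
  by_contra hne
  have hlt : p < c + 1 := lt_of_le_of_ne hle hne
  have hpp := Function.isPeriodicPt_minimalPeriod (⇑(Equiv.prodCongr π π)) x
  rw [Function.IsPeriodicPt, Function.IsFixedPt, ← Equiv.Perm.coe_pow, ← hp, sigma_pow] at hpp
  have hv : ((π ^ p) x.1).val = x.1.val :=
    congrArg (fun y : Fin (c + 1) × Fin (c + 1) => y.1.val) hpp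
  rw [pi_pow_val π hπ] at hv
  have hx1 : x.1.val < c + 1 := x.1.isLt
  rcases Nat.lt_or_ge (x.1.val + p) (c + 1) with hcase | hcase
  · rw [Nat.mod_eq_of_lt hcase] at hv; omega
  · rw [Nat.mod_eq_sub_mod hcase, Nat.mod_eq_of_lt (by omega)] at hv
    omega

lemma sum_eps (hπ : ∀ i : Fin (c + 1), (π i).val = (i.val + 1) % (c + 1))
    (x : Fin (c + 1) × Fin (c + 1)) (F : Finset ℕ) :
    ∑ i ∈ F, signOf (c + 1) 1 (((Equiv.prodCongr π π) ^ i) x)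
      = ((F.filter (fun i => (x.1.val + i) % (c + 1) = 0)).card : ℤ)
        - ((F.filter (fun i => (x.2.val + i) % (c + 1) = 0)).card : ℤ) := by
  simp_rw [eps_eq π hπ]
  rw [Finset.sum_sub_distrib, Finset.sum_boole, Finset.sum_boole]

lemma sum_range_eps (hπ : ∀ i : Fin (c + 1), (π i).val = (i.val + 1) % (c + 1))
    (x : Fin (c + 1) × Fin (c + 1)) (m : ℕ) (hm : m ≤ c + 1) :
    ∑ i ∈ Finset.range m, signOf (c + 1) 1 (((Equiv.prodCongr π π) ^ i) x)
      = (if zt (c + 1) x.1.val < m then (1:ℤ) else 0)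
        - (if zt (c + 1) x.2.val < m then (1:ℤ) else 0) := by
  have hh : 0 < c + 1 := Nat.succ_pos c
  rw [sum_eps π hπ, count_range hh _ m hm, count_range hh _ m hm]
  split_ifs <;> norm_num

lemma sign_eq_neg_one {z : Fin (c + 1) × Fin (c + 1)} (h1 : signOf (c + 1) 1 z = -1) :
    z.2.val = 0 ∧ z.1.val ≠ 0 := by
  unfold signOf at h1
  split_ifs at h1 with hA hB <;> omega

lemma starts_of (hπ : ∀ i : Fin (c + 1), (π i).val = (i.val + 1) % (c + 1))
    (z : Fin (c + 1) × Fin (c + 1)) (hz2 : z.2.val = 0) (hz1 : z.1.val ≠ 0) :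
    StartsSegment (Equiv.prodCongr π π) (signOf (c + 1) 1) 1 z := by
  have hh : 0 < c + 1 := Nat.succ_pos c
  have hp : z.1.val < c + 1 := z.1.isLt
  have hztB : zt (c + 1) z.2.val = 0 := by
    rw [hz2]; simp [zt]
  have hztA : zt (c + 1) z.1.val = (c + 1) - z.1.val := by
    rw [zt_eq hh, Nat.mod_eq_of_lt hp, if_neg hz1]
  have heps0 : signOf (c + 1) 1 z = -1 := by
    have h0 := eps_eq π hπ 0 z
    rw [pow_zero] at h0
    simp only [Equiv.Perm.coe_one, id_eq] at h0
    rw [h0]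
    simp only [Nat.add_zero]
    rw [if_neg (by rw [Nat.mod_eq_of_lt hp]; exact hz1), if_pos (by rw [hz2]; simp)]
    norm_num
  refine ⟨heps0, (c + 1) - z.1.val, by omega, ?_, ?_, ?_, ?_, 0, by omega, ?_⟩
  · rw [minPer π hπ]; omega
  · rw [eps_eq π hπ]
    rw [if_pos (by rw [Nat.add_sub_cancel' hp.le, Nat.mod_self]),
      if_neg (by rw [hz2, Nat.zero_add, Nat.mod_eq_of_lt (by omega)]; omega)]
    norm_num
  · rw [sum_range_eps π hπ z _ (by omega), hztA, hztB,
      if_pos (by omega), if_pos (by omega)]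
    ring
  · intro j hj
    rw [sum_range_eps π hπ z _ (by omega), hztA, hztB,
      if_neg (by omega), if_pos (by omega)]
    norm_num
  · rw [sum_range_eps π hπ z _ (by omega), hztA, hztB,
      if_neg (by omega), if_pos (by omega)]
    norm_num

lemma starts_iff (hπ : ∀ i : Fin (c + 1), (π i).val = (i.val + 1) % (c + 1))
    (z : Fin (c + 1) × Fin (c + 1)) :
    StartsSegment (Equiv.prodCongr π π) (signOf (c + 1) 1) 1 z
      ↔ (z.2.val = 0 ∧ z.1.val ≠ 0) :=
  ⟨fun hs => sign_eq_neg_one hs.1, fun hz => starts_of π hπ z hz.1 hz.2⟩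

lemma not_starts (hπ : ∀ i : Fin (c + 1), (π i).val = (i.val + 1) % (c + 1))
    (n : ℕ) (hn : 2 ≤ n) (z : Fin (c + 1) × Fin (c + 1)) :
    ¬ StartsSegment (Equiv.prodCongr π π) (signOf (c + 1) 1) n z := by
  rintro ⟨h1, t, ht0, htlt, h2, h3, h4, j₀, hj₀, hsum⟩
  rw [minPer π hπ] at htlt
  rw [sum_range_eps π hπ z _ (by omega)] at hsum
  split_ifs at hsum <;> omega

lemma card_starts_one (hπ : ∀ i : Fin (c + 1), (π i).val = (i.val + 1) % (c + 1)) :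
    Nat.card {x : Fin (c + 1) × Fin (c + 1) //
        StartsSegment (Equiv.prodCongr π π) (signOf (c + 1) 1) 1 x} = c := by
  have e1 : {x : Fin (c + 1) × Fin (c + 1) //
        StartsSegment (Equiv.prodCongr π π) (signOf (c + 1) 1) 1 x}
      ≃ {x : Fin (c + 1) × Fin (c + 1) // x.2.val = 0 ∧ x.1.val ≠ 0} :=
    Equiv.subtypeEquivRight (fun x => starts_iff π hπ x)
  have e2 : {x : Fin (c + 1) × Fin (c + 1) // x.2.val = 0 ∧ x.1.val ≠ 0} ≃ Fin c :=
    { toFun := fun z => ⟨z.1.1.val - 1, by have h1 := z.1.1.isLt; have h2 := z.2.2; omega⟩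
      invFun := fun q => ⟨(⟨q.val + 1, by omega⟩, ⟨0, by omega⟩), rfl, Nat.succ_ne_zero q.val⟩
      left_inv := fun z => by
        apply Subtype.ext
        apply Prod.ext
        · apply Fin.ext
          have h2 := z.2.2
          simp only []
          omega
        · apply Fin.ext
          exact z.2.1.symm
      right_inv := fun q => by apply Fin.ext; simp }
  rw [Nat.card_congr (e1.trans e2), Nat.card_eq_fintype_card, Fintype.card_fin]

lemma card_starts_big (hπ : ∀ i : Fin (c + 1), (π i).val = (i.val + 1) % (c + 1))
    (n : ℕ) (hn : 2 ≤ n) :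
    Nat.card {x : Fin (c + 1) × Fin (c + 1) //
        StartsSegment (Equiv.prodCongr π π) (signOf (c + 1) 1) n x} = 0 := by
  haveI : IsEmpty {x : Fin (c + 1) × Fin (c + 1) //
      StartsSegment (Equiv.prodCongr π π) (signOf (c + 1) 1) n x} :=
    ⟨fun z => not_starts π hπ n hn z.1 z.2⟩
  exact Nat.card_of_isEmpty

end GammaD1

/-- Let `h = c + 1` (`d = 1`, `c ≥ 1`) and let `π` be the `h`-cycle `i ↦ i + 1 (mod h)`.
Consider the orbits of `(π, π)` on `{1,…,h}²` with the sign sequence `ε` attached to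
`d = 1`.  Then: the orbits with identically zero sign sequence are exactly the diagonal,
which forms a single orbit; every non-diagonal orbit has exactly one entry `1` and one
entry `-1` in its cyclic sign sequence, is circular of level `1`, and carries exactly
one free linear segment, which has level `1`.  Consequently
`γ(m) = ∑_O ∑_{n=1}^m a_n(O) = h - 1 = c` for all `m ≥ 1`. -/
theorem gammaSeq_d_eq_one (c : ℕ) (hc : 1 ≤ c)
    (π : Equiv.Perm (Fin (c + 1)))
    (hπ : ∀ i : Fin (c + 1), (π i).val = (i.val + 1) % (c + 1)) :
    (∀ x : Fin (c + 1) × Fin (c + 1),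
      ((∀ i : ℕ, signOf (c + 1) 1 (((Equiv.prodCongr π π) ^ i) x) = 0) ↔ x.1 = x.2)) ∧
    (∀ x y : Fin (c + 1) × Fin (c + 1), x.1 = x.2 → y.1 = y.2 →
      ∃ i : ℕ, ((Equiv.prodCongr π π) ^ i) x = y) ∧
    (∀ x : Fin (c + 1) × Fin (c + 1), x.1 ≠ x.2 →
      ((Finset.range (Function.minimalPeriod (⇑(Equiv.prodCongr π π)) x)).filter
          (fun i => signOf (c + 1) 1 (((Equiv.prodCongr π π) ^ i) x) = 1)).card = 1 ∧
      ((Finset.range (Function.minimalPeriod (⇑(Equiv.prodCongr π π)) x)).filter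
          (fun i => signOf (c + 1) 1 (((Equiv.prodCongr π π) ^ i) x) = -1)).card = 1 ∧
      OrbitCircularOfLevel (Equiv.prodCongr π π) (signOf (c + 1) 1) 1 x ∧
      (∃! i : ℕ, i < Function.minimalPeriod (⇑(Equiv.prodCongr π π)) x ∧
        StartsSegment (Equiv.prodCongr π π) (signOf (c + 1) 1) 1
          (((Equiv.prodCongr π π) ^ i) x)) ∧
      (∀ n : ℕ, 2 ≤ n → ∀ i : ℕ,
        ¬ StartsSegment (Equiv.prodCongr π π) (signOf (c + 1) 1) n
          (((Equiv.prodCongr π π) ^ i) x))) ∧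
    (∀ m : ℕ, 1 ≤ m →
      gammaSeq (Equiv.prodCongr π π) (signOf (c + 1) 1) m = c) := by
  have hh : 0 < c + 1 := Nat.succ_pos c
  refine ⟨?_, ?_, ?_, ?_⟩
  · -- part 1: identically zero iff diagonal
    intro x
    constructor
    · intro hall
      by_contra hne
      have h1 := hall (GammaD1.zt (c + 1) x.1.val)
      have hq : ¬ ((x.2.val + GammaD1.zt (c + 1) x.1.val) % (c + 1) = 0) := by
        intro hq
        have h2 := (GammaD1.mod_zero_iff hh x.2.val _
          (GammaD1.zt_lt hh x.1.val)).mp hq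
        exact hne (Fin.val_injective (GammaD1.zt_inj hh x.1.isLt x.2.isLt h2))
      rw [GammaD1.eps_eq π hπ, if_pos (GammaD1.zt_add hh _), if_neg hq] at h1
      norm_num at h1
    · intro heq i
      rw [GammaD1.eps_eq π hπ, heq]
      exact sub_self _
  · -- part 2: diagonal is a single orbit
    intro x y hx hy
    refine ⟨if x.1.val ≤ y.1.val then y.1.val - x.1.val
      else (c + 1) + y.1.val - x.1.val, ?_⟩
    rw [GammaD1.sigma_pow]
    have hval : ((π ^ (if x.1.val ≤ y.1.val then y.1.val - x.1.val
        else (c + 1) + y.1.val - x.1.val)) x.1).val = y.1.val := by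
      rw [GammaD1.pi_pow_val π hπ]
      split_ifs with hle
      · rw [show x.1.val + (y.1.val - x.1.val) = y.1.val from by omega,
          Nat.mod_eq_of_lt y.1.isLt]
      · have hx1 : x.1.val < c + 1 := x.1.isLt
        rw [show x.1.val + ((c + 1) + y.1.val - x.1.val) = y.1.val + (c + 1) from by omega,
          Nat.add_mod_right, Nat.mod_eq_of_lt y.1.isLt]
    have h1 : (π ^ (if x.1.val ≤ y.1.val then y.1.val - x.1.val
        else (c + 1) + y.1.val - x.1.val)) x.1 = y.1 := Fin.ext hval
    refine Prod.ext ?_ ?_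
    · exact h1
    · show (π ^ _) x.2 = y.2
      rw [← hx, ← hy]
      exact h1
  · -- part 3
    intro x hx
    have hab : x.1.val ≠ x.2.val := fun h => hx (Fin.val_injective h)
    have hiaib : GammaD1.zt (c + 1) x.1.val ≠ GammaD1.zt (c + 1) x.2.val :=
      fun h => hab (GammaD1.zt_inj hh x.1.isLt x.2.isLt h)
    refine ⟨?_, ?_, ⟨?_, ?_, ?_⟩, ?_, ?_⟩
    · -- exactly one +1
      rw [GammaD1.minPer π hπ]
      have hfilt : (Finset.range (c + 1)).filter
          (fun i => signOf (c + 1) 1 (((Equiv.prodCongr π π) ^ i) x) = 1)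
          = {GammaD1.zt (c + 1) x.1.val} := by
        ext i
        simp only [Finset.mem_filter, Finset.mem_range, Finset.mem_singleton]
        constructor
        · rintro ⟨hi, hsign⟩
          rw [GammaD1.eps_eq π hπ, GammaD1.ite_sub_eq_one_iff] at hsign
          exact (GammaD1.mod_zero_iff hh _ i hi).mp hsign.1
        · rintro rfl
          refine ⟨GammaD1.zt_lt hh _, ?_⟩
          rw [GammaD1.eps_eq π hπ, GammaD1.ite_sub_eq_one_iff]
          refine ⟨GammaD1.zt_add hh _, fun hq => ?_⟩
          exact hiaib ((GammaD1.mod_zero_iff hh _ _ (GammaD1.zt_lt hh _)).mp hq)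
      rw [hfilt, Finset.card_singleton]
    · -- exactly one -1
      rw [GammaD1.minPer π hπ]
      have hfilt : (Finset.range (c + 1)).filter
          (fun i => signOf (c + 1) 1 (((Equiv.prodCongr π π) ^ i) x) = -1)
          = {GammaD1.zt (c + 1) x.2.val} := by
        ext i
        simp only [Finset.mem_filter, Finset.mem_range, Finset.mem_singleton]
        constructor
        · rintro ⟨hi, hsign⟩
          rw [GammaD1.eps_eq π hπ, GammaD1.ite_sub_eq_neg_one_iff] at hsign
          exact (GammaD1.mod_zero_iff hh _ i hi).mp hsign.2
        · rintro rfl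
          refine ⟨GammaD1.zt_lt hh _, ?_⟩
          rw [GammaD1.eps_eq π hπ, GammaD1.ite_sub_eq_neg_one_iff]
          refine ⟨fun hq => ?_, GammaD1.zt_add hh _⟩
          exact hiaib ((GammaD1.mod_zero_iff hh _ _ (GammaD1.zt_lt hh _)).mp hq).symm
      rw [hfilt, Finset.card_singleton]
    · -- circular: total sum zero
      rw [GammaD1.minPer π hπ, GammaD1.sum_range_eps π hπ x _ le_rfl,
        if_pos (GammaD1.zt_lt hh _), if_pos (GammaD1.zt_lt hh _)]
      exact sub_self _
    · -- circular: bounds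
      intro u s hs
      rw [GammaD1.minPer π hπ] at hs
      rw [GammaD1.sum_eps π hπ]
      have t1 := GammaD1.count_Icc_le_one hh x.1.val u s hs
      have t2 := GammaD1.count_Icc_le_one hh x.2.val u s hs
      rw [abs_le]
      constructor <;> push_cast <;> omega
    · -- circular: attained
      refine ⟨GammaD1.zt (c + 1) x.1.val, 0, by rw [GammaD1.minPer π hπ]; omega, ?_⟩
      simp only [Nat.add_zero, Finset.Icc_self, Finset.sum_singleton]
      rw [GammaD1.eps_eq π hπ,
        if_pos (GammaD1.zt_add hh _),
        if_neg (fun hq => hiaib ((GammaD1.mod_zero_iff hh _ _ (GammaD1.zt_lt hh _)).mp hq))]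
      norm_num
    · -- unique free linear segment
      refine ⟨GammaD1.zt (c + 1) x.2.val,
        ⟨by rw [GammaD1.minPer π hπ]; exact GammaD1.zt_lt hh _, ?_⟩, ?_⟩
      · apply GammaD1.starts_of π hπ
        · rw [GammaD1.sigma_pow]
          show ((π ^ _) x.2).val = 0
          rw [GammaD1.pi_pow_val π hπ]
          exact GammaD1.zt_add hh _
        · rw [GammaD1.sigma_pow]
          show ((π ^ _) x.1).val ≠ 0
          rw [GammaD1.pi_pow_val π hπ]
          intro hq
          exact hiaib ((GammaD1.mod_zero_iff hh _ _ (GammaD1.zt_lt hh _)).mp hq).symm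
      · rintro i ⟨hi, hstart⟩
        rw [GammaD1.minPer π hπ] at hi
        have h1 := hstart.1
        rw [GammaD1.eps_eq π hπ, GammaD1.ite_sub_eq_neg_one_iff] at h1
        exact (GammaD1.mod_zero_iff hh _ i hi).mp h1.2
    · -- no segments of level ≥ 2
      intro n hn i
      exact GammaD1.not_starts π hπ n hn _
  · -- part 4: gamma
    intro m hm
    unfold gammaSeq
    rw [Finset.sum_eq_single_of_mem 1 (Finset.mem_Icc.mpr ⟨le_rfl, hm⟩)
      (fun b hb hb1 => GammaD1.card_starts_big π hπ b
        (by rw [Finset.mem_Icc] at hb; omega))]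
    exact GammaD1.card_starts_one π hπ
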